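/- Let C(n,u) be a t-level EII code over a finite field F, the sum of the 1-level EII codes C(n,u^{(v)}), 0 ≤ v ≤ t−1. Suppose C = Σ_{v=0}^{t−1} C^{(v)} and D = Σ_{v=0}^{t−1} D^{(v)} with C^{(v)}, D^{(v)} ∈ C(n,u^{(v)}) for all v. If for some row index i the i-th row of C equals the i-th row of D, then for every v with 0 ≤ v ≤ t−1 the i-th row of C^{(v)} equals the i-th row of D^{(v)}. (Equivalently: each row of an array in C(n,u) uniquely determines the corresponding rows of its components in the codes C(n,u^{(v)}).) -/

import Mathlib

open scoped BigOperators

section Defs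

variable {F : Type*} [Field F]

/-- `C` has minimum (symbol-)Hamming distance exactly `d`. -/
def HasMinDist {ι S : Type*} [Fintype ι] [Zero S] [DecidableEq S]
    (C : Set (ι → S)) (d : ℕ) : Prop :=
  (∀ c ∈ C, c ≠ 0 → d ≤ hammingNorm c) ∧ ∃ c ∈ C, c ≠ 0 ∧ hammingNorm c = d

/-- weight of an `m × n` array: the number of nonzero entries. -/
def arrayWt [DecidableEq F] {m n : ℕ} (A : Matrix (Fin m) (Fin n) F) : ℕ :=
  hammingNorm (fun p : Fin m × Fin n => A p.1 p.2)

/-- `C` admits a systematic encoder on its first `k` coordinates. -/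
def SystematicOn {n : ℕ} (C : Submodule F (Fin n → F)) (k : ℕ) : Prop :=
  Function.Bijective (fun (c : C) (i : Fin k) =>
    if h : (i : ℕ) < n then (c : Fin n → F) ⟨i, h⟩ else 0)

/-- symbols of the array in columns `a, a+1, ..., a+w-1`. -/
def colSymb [Zero F] {m n : ℕ} (A : Matrix (Fin m) (Fin n) F) (a w : ℕ) :
    Fin m → Fin w → F :=
  fun r k => if hk : a + (k : ℕ) < n then A r ⟨a + k, hk⟩ else 0

/-- the 1-level EII code with horizontal code `C0`, vertical code `V0` over `F^w`
(occupying columns `a,…,a+w-1`), and `a` initial zero columns. -/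
def OneLevelEII {m n w : ℕ} (C0 : Submodule F (Fin n → F))
    (V0 : Submodule F (Fin m → Fin w → F)) (a : ℕ) :
    Set (Matrix (Fin m) (Fin n) F) :=
  { A | (∀ r (c : Fin n), (c : ℕ) < a → A r c = 0) ∧ (∀ r, A r ∈ C0) ∧
        colSymb A a w ∈ V0 }

/-- the sum of the 1-level EII component codes of levels `a ≤ i < t`, where level `i`
has horizontal code `Chor i`, vertical code `Vc i` over `F^{u(i+1)-u(i)}`, and
`n - u(i+1)` initial zero columns. -/
def EIICodeRange {m n : ℕ} (a t : ℕ) (u : ℕ → ℕ)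
    (Chor : ℕ → Submodule F (Fin n → F))
    (Vc : (i : ℕ) → Submodule F (Fin m → Fin (u (i + 1) - u i) → F)) :
    Set (Matrix (Fin m) (Fin n) F) :=
  { A | ∃ g : ℕ → Matrix (Fin m) (Fin n) F,
        (∀ i, a ≤ i → i < t → g i ∈ OneLevelEII (Chor i) (Vc i) (n - u (i + 1))) ∧
        A = ∑ i ∈ Finset.Ico a t, g i }

/-- the t-level EII code: sum of the 1-level EII component codes of levels `0 ≤ i < t`. -/
def EIICode {m n : ℕ} (t : ℕ) (u : ℕ → ℕ)
    (Chor : ℕ → Submodule F (Fin n → F))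
    (Vc : (i : ℕ) → Submodule F (Fin m → Fin (u (i + 1) - u i) → F)) :
    Set (Matrix (Fin m) (Fin n) F) :=
  EIICodeRange 0 t u Chor Vc

end Defs

/-- In a t-level EII code, each row of an array uniquely determines
the corresponding rows of its 1-level components: if `C = Σ g v` and `D = Σ h' v` with
`g v, h' v` in the `v`-th 1-level component code and the `i`-th rows of `C` and `D`
coincide, then the `i`-th rows of `g v` and `h' v` coincide for every `v < t`. -/
theorem stmt10 {F : Type*} [Field F] [DecidableEq F]
    {t n m : ℕ} (ht : 1 ≤ t)
    (u s : ℕ → ℕ) (dH dV : ℕ → ℕ)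
    (hu : ∀ i < t, u i < u (i + 1)) (hun : u t ≤ n)
    (hs : ∀ i < t, 1 ≤ s i) (hst : s t = 0 → u t = n)
    (hm : m = ∑ i ∈ Finset.range (t + 1), s i)
    (Chor : ℕ → Submodule F (Fin n → F))
    (hnest : ∀ i, i + 1 < t → Chor (i + 1) < Chor i)
    (hCdim : ∀ i < t, Module.finrank F (Chor i) = n - u i)
    (hCsys : ∀ i < t, SystematicOn (Chor i) (n - u i))
    (hCdist : ∀ i < t, HasMinDist (Chor i : Set (Fin n → F)) (dH i))
    (Vc : (i : ℕ) → Submodule F (Fin m → Fin (u (i + 1) - u i) → F))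
    (hVdim : ∀ i < t, Module.finrank F (Vc i)
        = (m - ∑ j ∈ Finset.Icc (i + 1) t, s j) * (u (i + 1) - u i))
    (hVdist : ∀ i < t, HasMinDist (Vc i : Set (Fin m → Fin (u (i + 1) - u i) → F))
        (dV (t - 1 - i)))
    (g h' : ℕ → Matrix (Fin m) (Fin n) F)
    (hg : ∀ v < t, g v ∈ OneLevelEII (Chor v) (Vc v) (n - u (v + 1)))
    (hh : ∀ v < t, h' v ∈ OneLevelEII (Chor v) (Vc v) (n - u (v + 1)))
    (i : Fin m)
    (hrow : (∑ v ∈ Finset.range t, g v) i = (∑ v ∈ Finset.range t, h' v) i) :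
    ∀ v < t, g v i = h' v i := by
  classical
  set e : ℕ → Fin n → F := fun v => g v i - h' v i with he_def
  -- each e v lies in Chor v
  have he_mem : ∀ v, v < t → e v ∈ Chor v := fun v hv =>
    (Chor v).sub_mem ((hg v hv).2.1 i) ((hh v hv).2.1 i)
  -- each e v vanishes on the first n - u (v+1) coordinates
  have he_zero : ∀ v, v < t → ∀ c : Fin n, (c : ℕ) < n - u (v + 1) → e v c = 0 := by
    intro v hv c hc
    have h1 := (hg v hv).1 i c hc
    have h2 := (hh v hv).1 i c hc
    simp [he_def, h1, h2]
  -- the sum of the e v over range t is 0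
  have hsum0 : ∑ v ∈ Finset.range t, e v = 0 := by
    funext c
    have hg' : (∑ v ∈ Finset.range t, g v) i c = ∑ v ∈ Finset.range t, g v i c :=
      Matrix.sum_apply i c _ _
    have hh'' : (∑ v ∈ Finset.range t, h' v) i c = ∑ v ∈ Finset.range t, h' v i c :=
      Matrix.sum_apply i c _ _
    have := congrFun hrow c
    rw [hg', hh''] at this
    simp only [he_def, Finset.sum_apply, Pi.sub_apply, Pi.zero_apply,
      Finset.sum_sub_distrib, this, sub_self]
  -- monotonicity of the nested codes
  have hmono : ∀ a b : ℕ, a ≤ b → b < t → Chor b ≤ Chor a := by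
    intro a b hab hbt
    induction b with
    | zero => simp [Nat.le_zero.mp hab]
    | succ b ih =>
      rcases Nat.eq_or_lt_of_le hab with h | h
      · simp [h]
      · exact le_trans (le_of_lt (hnest b hbt)) (ih (by omega) (by omega))
  -- a codeword of Chor j vanishing on its systematic part is zero
  have hinj : ∀ j, j < t → ∀ x : Fin n → F, x ∈ Chor j →
      (∀ c : Fin n, (c : ℕ) < n - u j → x c = 0) → x = 0 := by
    intro j hj x hx hx0
    have hb := (hCsys j hj).1
    have hkey : (⟨x, hx⟩ : Chor j) = ⟨0, (Chor j).zero_mem⟩ := by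
      apply hb
      funext k
      simp only []
      by_cases h : (k : ℕ) < n
      · simp only [dif_pos h]
        exact hx0 ⟨k, h⟩ k.2
      · simp [dif_neg h]
    exact congrArg Subtype.val hkey
  -- main downward induction
  have main : ∀ d v, v + d = t → (∑ w ∈ Finset.Ico v t, e w) = 0 →
      ∀ w, v ≤ w → w < t → e w = 0 := by
    intro d
    induction d with
    | zero => intro v hv _ w hw1 hw2; omega
    | succ d ih =>
      intro v hv hsum w hw1 hw2
      have hvt : v < t := by omega
      have hsplit : ∑ w ∈ Finset.Ico v t, e w
          = e v + ∑ w ∈ Finset.Ico (v + 1) t, e w :=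
        Finset.sum_eq_sum_Ico_succ_bot hvt e
      have hev : e v = 0 := by
        by_cases hvt1 : v + 1 < t
        · have hmemtail : (∑ w ∈ Finset.Ico (v + 1) t, e w) ∈ Chor (v + 1) :=
            Submodule.sum_mem _ (fun w hw => by
              simp only [Finset.mem_Ico] at hw
              exact hmono (v + 1) w hw.1 hw.2 (he_mem w hw.2))
          have hevmem : e v ∈ Chor (v + 1) := by
            have : e v = -(∑ w ∈ Finset.Ico (v + 1) t, e w) := by
              rw [hsplit] at hsum
              linear_combination (norm := abel) hsum
            rw [this]; exact (Chor (v + 1)).neg_mem hmemtail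
          exact hinj (v + 1) hvt1 (e v) hevmem (he_zero v hvt)
        · have hteq : t = v + 1 := by omega
          have : (Finset.Ico (v + 1) t) = ∅ := by
            rw [hteq]; simp
          rw [this, Finset.sum_empty, add_zero] at hsplit
          rw [hsplit] at hsum; exact hsum
      rcases Nat.eq_or_lt_of_le hw1 with h | h
      · rw [← h]; exact hev
      · have htail : (∑ w ∈ Finset.Ico (v + 1) t, e w) = 0 := by
          rw [hsplit, hev, zero_add] at hsum; exact hsum
        exact ih (v + 1) (by omega) htail w h hw2
  intro v hv
  have h0 : e v = 0 := by
    apply main t 0 (by omega) _ v (Nat.zero_le v) hv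
    rw [← Finset.range_eq_Ico]; exact hsum0
  have := sub_eq_zero.mp h0
  exact this
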